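/- arXiv:2506.14123 — 2 statements merged into one kernel-verified Lean document; each statement's English description precedes it below -/
import Mathlib

section
/- Let S₁ and S₂ be byte strings and set T₁ = encode(S₁) and T₂ = encode(S₂). Then the concatenation T₁ ⧺ T₂ is a valid token sequence if and only if no merge applied during the run of encode on S₁ ⧺ S₂ crosses position |S₁|. -/
/-!
Formalization of a BPE tokenizer with an ordered merge list.

* `σ` is the (finite) byte alphabet, `τ` is the (finite) vocabulary of tokens.
* `base` embeds each byte as a distinct base token.
* `dec` decodes a single token to a byte string; it is extended to token
  sequences by concatenation (`decodeSeq`).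
* `merges` is the ordered merge list; each merge `(l, r, n)` replaces an
  adjacent pair `(l, r)` by the single token `n`, and satisfies
  `dec n = dec l ++ dec r`.
* `encode` turns a byte string into its base tokens and then, processing the
  merges in order, repeatedly replaces the leftmost adjacent occurrence of
  `(l, r)` by `n` until no occurrence remains, before moving to the next merge.
-/

structure BPE (σ τ : Type*) where
  base : σ → τ
  dec : τ → List σ
  merges : List (τ × τ × τ)
  base_inj : Function.Injective base
  dec_base : ∀ b, dec (base b) = [b]
  dec_merge : ∀ m ∈ merges, dec m.2.2 = dec m.1 ++ dec m.2.1

namespace BPE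

variable {σ τ : Type*} [DecidableEq τ]

/-- Decode a token sequence by concatenating the decodings of its tokens. -/
def decodeSeq (B : BPE σ τ) (T : List τ) : List σ := (T.map B.dec).flatten

/-- Replace the leftmost adjacent occurrence of `(l, r)` by `n`, if any,
also returning the starting byte position of the replaced pair. -/
def replaceLeftmost (B : BPE σ τ) (l r n : τ) : List τ → Option (ℕ × List τ)
  | [] => none
  | [_] => none
  | t :: u :: rest =>
      if t = l ∧ u = r then some (0, n :: rest)
      else (B.replaceLeftmost l r n (u :: rest)).map
        (fun p => (p.1 + (B.dec t).length, t :: p.2))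

/-- Repeatedly replace the leftmost adjacent occurrence of `(l, r)` by `n`
until no occurrence remains (the fuel, taken to be the length of the list,
suffices since every replacement shortens the list).  Also returns the list
of byte positions at which replacements were performed, in order. -/
def runMerge (B : BPE σ τ) (l r n : τ) : ℕ → List τ → List τ × List ℕ
  | 0, T => (T, [])
  | fuel + 1, T =>
    match B.replaceLeftmost l r n T with
    | none => (T, [])
    | some (p, T') =>
      let q := B.runMerge l r n fuel T'
      (q.1, p :: q.2)

/-- Process an (indexed) list of merges in order, starting from token sequence
`T`; returns the final token sequence together with the ordered list of merge
applications performed, each recorded as a pair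
(index of the merge in the merge list, starting byte position). -/
def encodeRunAux (B : BPE σ τ) : List (ℕ × τ × τ × τ) → List τ → List τ × List (ℕ × ℕ)
  | [], T => (T, [])
  | (i, l, r, n) :: ms, T =>
    let q := B.runMerge l r n T.length T
    let q' := B.encodeRunAux ms q.1
    (q'.1, q.2.map (fun p => (i, p)) ++ q'.2)

/-- The full run of the BPE encoder on a byte string `S`: the final token
sequence together with the ordered list of merge applications performed. -/
def encodeRun (B : BPE σ τ) (S : List σ) : List τ × List (ℕ × ℕ) :=
  B.encodeRunAux (B.merges.zipIdx.map Prod.swap) (S.map B.base)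

/-- BPE encoding of a byte string. -/
def encode (B : BPE σ τ) (S : List σ) : List τ := (B.encodeRun S).1

/-- The ordered list of merge applications (merge index, starting byte
position) performed during the run of `encode` on `S`. -/
def encodeApps (B : BPE σ τ) (S : List σ) : List (ℕ × ℕ) := (B.encodeRun S).2

/-- A token sequence is *valid* if it is the canonical encoding of the byte
string it decodes to. -/
def Valid (B : BPE σ τ) (T : List τ) : Prop := B.encode (B.decodeSeq T) = T

/-- The merge list is in *normal form*:
(i) each token is produced by at most one merge;
(ii) every token `t` satisfies `encode (dec t) = [t]`;
(iii) every merge occurs later in the merge list than the merges producing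
each of its two input tokens. -/
def NormalForm (B : BPE σ τ) : Prop :=
  (∀ i j (hi : i < B.merges.length) (hj : j < B.merges.length),
      (B.merges[i]'hi).2.2 = (B.merges[j]'hj).2.2 → i = j) ∧
  (∀ t : τ, B.encode (B.dec t) = [t]) ∧
  (∀ i j (hi : i < B.merges.length) (hj : j < B.merges.length),
      (B.merges[i]'hi).2.2 = (B.merges[j]'hj).1 ∨
        (B.merges[i]'hi).2.2 = (B.merges[j]'hj).2.1 → i < j)

/-- The merge application `app = (t, p)` *crosses* byte position `c` if the
token it creates (the output of merge `t`, starting at byte position `p`)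
has a byte span properly containing `c`. -/
def AppCrosses (B : BPE σ τ) (app : ℕ × ℕ) (c : ℕ) : Prop :=
  ∃ h : app.1 < B.merges.length,
    app.2 < c ∧ c < app.2 + (B.dec (B.merges[app.1]'h).2.2).length

/-- Some merge applied during the run of `encode` on `S` crosses position `c`. -/
def MergeCrossesInRun (B : BPE σ τ) (S : List σ) (c : ℕ) : Prop :=
  ∃ app ∈ B.encodeApps S, B.AppCrosses app c

/-- The token sequence `U` contains a token whose byte span properly
contains position `c`. -/
def TokenCrosses (B : BPE σ τ) (U : List τ) (c : ℕ) : Prop :=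
  ∃ k, k < U.length ∧
    (B.decodeSeq (U.take k)).length < c ∧ c < (B.decodeSeq (U.take (k + 1))).length

end BPE
namespace BPE

variable {σ τ : Type*} [DecidableEq τ]

/-- The *Valid Covering Tree* of a byte string `P`: the set of all nonempty
token sequences `T = [t₁, …, tₙ]` such that (1) `P` is a prefix of
`decode T`, (2) `decode [t₁, …, t_{n-1}]` is a prefix of `P`, and
(3) `T` is valid. -/
def VCT (B : BPE σ τ) (P : List σ) : Set (List τ) :=
  {T | T ≠ [] ∧ P <+: B.decodeSeq T ∧ B.decodeSeq T.dropLast <+: P ∧ B.Valid T}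

/-- The maximal prefix of a token sequence whose total decoded length is at
most `k`, i.e. the tokens whose byte spans end at or before position `k`
(together with their spans, which are determined by the preceding tokens). -/
def spanPrefix (B : BPE σ τ) (k : ℕ) : List τ → List τ
  | [] => []
  | t :: T =>
      if (B.dec t).length ≤ k then t :: B.spanPrefix (k - (B.dec t).length) T
      else []

/-- `L₀` is a *lookahead bound* for the tokenizer if whenever two byte strings
agree on their first `k + L₀` bytes, the tokens of their encodings whose byte
spans end at or before position `k` coincide (with identical spans). -/
def LookaheadBound (B : BPE σ τ) (L₀ : ℕ) : Prop :=
  ∀ (x x' : List σ) (k : ℕ), x.take (k + L₀) = x'.take (k + L₀) →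
    B.spanPrefix k (B.encode x) = B.spanPrefix k (B.encode x')

/-- `U'` is the minimal covering prefix of `U` with respect to `P`: the
shortest prefix of `U` whose decoding has `P` as a prefix. -/
def IsMinCover (B : BPE σ τ) (P : List σ) (U U' : List τ) : Prop :=
  U' <+: U ∧ P <+: B.decodeSeq U' ∧
    ∀ U'' : List τ, U'' <+: U → P <+: B.decodeSeq U'' → U'.length ≤ U''.length

/-- The pair `(l, r)` occurs adjacently in `T`. -/
def PairAdj (l r : τ) (T : List τ) : Prop := ∃ A C, T = A ++ l :: r :: C

/-- The merge application `a = (t, i)` (merge index `t`, starting byte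
position `i` of the left token) is applicable to the token sequence `T`. -/
def Applicable (B : BPE σ τ) (a : ℕ × ℕ) (T : List τ) : Prop :=
  ∃ h : a.1 < B.merges.length, ∃ A C : List τ,
    T = A ++ (B.merges[a.1]'h).1 :: (B.merges[a.1]'h).2.1 :: C ∧
      (B.decodeSeq A).length = a.2

/-- `T'` is obtained from `T` by performing the merge application `a = (t, i)`:
the input pair of merge `t`, occurring adjacently in `T` with the left token
starting at byte position `i`, is replaced by the output token of merge `t`. -/
def ApplyApp (B : BPE σ τ) (a : ℕ × ℕ) (T T' : List τ) : Prop :=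
  ∃ h : a.1 < B.merges.length, ∃ A C : List τ,
    T = A ++ (B.merges[a.1]'h).1 :: (B.merges[a.1]'h).2.1 :: C ∧
      (B.decodeSeq A).length = a.2 ∧
      T' = A ++ (B.merges[a.1]'h).2.2 :: C

/-- Lexicographic order on merge applications `(t, i)`. -/
def appLE (a a' : ℕ × ℕ) : Prop :=
  a.1 < a'.1 ∨ (a.1 = a'.1 ∧ a.2 ≤ a'.2)

/-- `GreedyChain B T₀ apps T` holds when the sequence of merge applications
`apps` leads from token sequence `T₀` to token sequence `T`, and each applied
application is lexicographically least among those applicable to the current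
token sequence. -/
inductive GreedyChain (B : BPE σ τ) : List τ → List (ℕ × ℕ) → List τ → Prop
  | nil (T : List τ) : GreedyChain B T [] T
  | cons {T T' Tf : List τ} {a : ℕ × ℕ} {apps : List (ℕ × ℕ)} :
      B.ApplyApp a T T' →
      (∀ a', B.Applicable a' T → appLE a a') →
      GreedyChain B T' apps Tf →
      GreedyChain B T (a :: apps) Tf

end BPE

namespace BPE

set_option linter.unusedSectionVars false

variable {σ τ : Type*} [DecidableEq τ] (B : BPE σ τ)

@[simp] lemma decodeSeq_nil : B.decodeSeq ([] : List τ) = [] := rfl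

@[simp] lemma decodeSeq_cons (t : τ) (T : List τ) :
    B.decodeSeq (t :: T) = B.dec t ++ B.decodeSeq T := by
  simp [decodeSeq]

@[simp] lemma decodeSeq_append (T U : List τ) :
    B.decodeSeq (T ++ U) = B.decodeSeq T ++ B.decodeSeq U := by
  simp [decodeSeq]

/-- Specification of a successful `replaceLeftmost`. -/
lemma replaceLeftmost_some {l r n : τ} :
    ∀ {T : List τ} {p : ℕ} {T' : List τ},
      B.replaceLeftmost l r n T = some (p, T') →
      ∃ A C, T = A ++ l :: r :: C ∧ T' = A ++ n :: C ∧ (B.decodeSeq A).length = p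
  | [], _, _, h => by simp [replaceLeftmost] at h
  | [t], _, _, h => by simp [replaceLeftmost] at h
  | t :: u :: rest, p, T', h => by
    rw [replaceLeftmost] at h
    split at h
    · rename_i hg
      obtain ⟨hp, hT'⟩ := Prod.mk.injEq .. ▸ (Option.some.injEq .. ▸ h :)
      exact ⟨[], rest, by simp [hg.1, hg.2], by simp [hT'.symm], by simp [hp.symm]⟩
    · cases ho : B.replaceLeftmost l r n (u :: rest) with
      | none => rw [ho] at h; simp at h
      | some q =>
        rw [ho] at h
        simp only [Option.map_some] at h
        obtain ⟨A, C, h1, h2, h3⟩ := replaceLeftmost_some (T := u :: rest) ho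
        obtain ⟨hp, hT'⟩ := Prod.mk.injEq .. ▸ (Option.some.injEq .. ▸ h :)
        refine ⟨t :: A, C, by rw [h1]; rfl, ?_, ?_⟩
        · rw [← hT', h2]; rfl
        · simp [← hp, ← h3, Nat.add_comm]

lemma replaceLeftmost_length {l r n : τ} {T : List τ} {p : ℕ} {T' : List τ}
    (h : B.replaceLeftmost l r n T = some (p, T')) :
    T'.length + 1 = T.length := by
  obtain ⟨A, C, h1, h2, -⟩ := B.replaceLeftmost_some h
  subst h1 h2; simp; omega

lemma decodeSeq_replaceLeftmost {l r n : τ} (Hlr : B.dec n = B.dec l ++ B.dec r)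
    {T : List τ} {p : ℕ} {T' : List τ}
    (h : B.replaceLeftmost l r n T = some (p, T')) :
    B.decodeSeq T' = B.decodeSeq T := by
  obtain ⟨A, C, h1, h2, -⟩ := B.replaceLeftmost_some h
  subst h1 h2; simp [Hlr]

lemma ne_replaceLeftmost {l r n : τ} (Hlr : B.dec n = B.dec l ++ B.dec r)
    {T : List τ} {p : ℕ} {T' : List τ}
    (h : B.replaceLeftmost l r n T = some (p, T'))
    (hT : ∀ t ∈ T, B.dec t ≠ []) : ∀ t ∈ T', B.dec t ≠ [] := by
  obtain ⟨A, C, h1, h2, -⟩ := B.replaceLeftmost_some h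
  subst h1 h2
  intro t ht
  rcases List.mem_append.1 ht with h | h
  · exact hT t (by simp [h])
  · rcases List.mem_cons.1 h with h | h
    · subst h
      rw [Hlr]
      have := hT l (by simp)
      simp_all
    · exact hT t (by simp [h])

lemma replaceLeftmost_append_some {l r n : τ} :
    ∀ {T₁ : List τ} (T₂ : List τ) {p : ℕ} {T₁' : List τ},
      B.replaceLeftmost l r n T₁ = some (p, T₁') →
      B.replaceLeftmost l r n (T₁ ++ T₂) = some (p, T₁' ++ T₂)
  | [], _, _, _, h => by simp [replaceLeftmost] at h
  | [t], _, _, _, h => by simp [replaceLeftmost] at h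
  | t :: u :: rest, T₂, p, T₁', h => by
    rw [replaceLeftmost] at h
    rw [List.cons_append, List.cons_append, replaceLeftmost]
    split at h
    · rename_i hg
      rw [if_pos hg]
      obtain ⟨hp, hT'⟩ := Prod.mk.injEq .. ▸ (Option.some.injEq .. ▸ h :)
      rw [← hp, ← hT']
      rfl
    · rename_i hg
      rw [if_neg hg]
      cases ho : B.replaceLeftmost l r n (u :: rest) with
      | none => rw [ho] at h; simp at h
      | some q =>
        rw [ho] at h
        simp only [Option.map_some] at h
        obtain ⟨hp, hT'⟩ := Prod.mk.injEq .. ▸ (Option.some.injEq .. ▸ h :)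
        have := replaceLeftmost_append_some (T₁ := u :: rest) T₂ (p := q.1) (T₁' := q.2) (by rw [ho])
        rw [List.cons_append] at this
        rw [this]
        simp [← hp, ← hT']

lemma replaceLeftmost_append_none {l r n : τ} :
    ∀ {T₁ : List τ} (T₂ : List τ),
      B.replaceLeftmost l r n T₁ = none →
      (∃ A C, T₁ = A ++ [l] ∧ T₂ = r :: C ∧
          B.replaceLeftmost l r n (T₁ ++ T₂) = some ((B.decodeSeq A).length, A ++ n :: C))
      ∨ B.replaceLeftmost l r n (T₁ ++ T₂) =
          (B.replaceLeftmost l r n T₂).map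
            (fun q => (q.1 + (B.decodeSeq T₁).length, T₁ ++ q.2))
  | [], T₂, _ => by
    right
    cases h : B.replaceLeftmost l r n T₂ <;> simp [h]
  | [t], T₂, h => by
    by_cases hts : t = l ∧ ∃ C, T₂ = r :: C
    · obtain ⟨ht, C, hC⟩ := hts
      left
      refine ⟨[], C, by simp [ht], hC, ?_⟩
      subst ht hC
      rw [List.singleton_append, replaceLeftmost, if_pos ⟨rfl, rfl⟩]
      simp
    · right
      cases T₂ with
      | nil => simp [replaceLeftmost]
      | cons u C =>
        rw [List.singleton_append, replaceLeftmost]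
        rw [if_neg]
        · cases ho : B.replaceLeftmost l r n (u :: C) <;> simp [ho, Nat.add_comm]
        · rintro ⟨h1, h2⟩
          exact hts ⟨h1, C, by rw [h2]⟩
  | t :: u :: rest, T₂, h => by
    rw [replaceLeftmost] at h
    split at h
    · simp at h
    · rename_i hg
      have ho : B.replaceLeftmost l r n (u :: rest) = none := by
        cases ho : B.replaceLeftmost l r n (u :: rest) <;> simp [ho] at h ⊢
      rcases replaceLeftmost_append_none (T₁ := u :: rest) T₂ ho with
        ⟨A, C, h1, h2, h3⟩ | hmap
      · left
        refine ⟨t :: A, C, by rw [List.cons_append, h1], h2, ?_⟩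
        rw [List.cons_append, List.cons_append, replaceLeftmost, if_neg hg]
        rw [List.cons_append] at h3
        rw [h3]
        simp [Nat.add_comm]
      · right
        rw [List.cons_append, List.cons_append, replaceLeftmost, if_neg hg]
        rw [List.cons_append] at hmap
        rw [hmap]
        cases hq : B.replaceLeftmost l r n T₂ <;> simp [hq, Nat.add_comm, Nat.add_assoc, Nat.add_left_comm]


lemma runMerge_of_none {l r n : τ} {T : List τ}
    (h : B.replaceLeftmost l r n T = none) (f : ℕ) :
    B.runMerge l r n f T = (T, []) := by
  cases f with
  | zero => rfl
  | succ g => rw [runMerge, h]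

lemma runMerge_succ_of_some {l r n : τ} {T : List τ} {p : ℕ} {T' : List τ}
    (h : B.replaceLeftmost l r n T = some (p, T')) (f : ℕ) :
    B.runMerge l r n (f + 1) T =
      ((B.runMerge l r n f T').1, p :: (B.runMerge l r n f T').2) := by
  rw [runMerge, h]

lemma decodeSeq_runMerge {l r n : τ} (Hlr : B.dec n = B.dec l ++ B.dec r) :
    ∀ (f : ℕ) (T : List τ), B.decodeSeq (B.runMerge l r n f T).1 = B.decodeSeq T
  | 0, T => rfl
  | f + 1, T => by
    cases h : B.replaceLeftmost l r n T with
    | none => rw [B.runMerge_of_none h]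
    | some q =>
      obtain ⟨p, T'⟩ := q
      rw [B.runMerge_succ_of_some h]
      exact (decodeSeq_runMerge Hlr f T').trans (B.decodeSeq_replaceLeftmost Hlr h)

lemma ne_runMerge {l r n : τ} (Hlr : B.dec n = B.dec l ++ B.dec r) :
    ∀ (f : ℕ) (T : List τ), (∀ t ∈ T, B.dec t ≠ []) →
      ∀ t ∈ (B.runMerge l r n f T).1, B.dec t ≠ []
  | 0, T, hT => hT
  | f + 1, T, hT => by
    cases h : B.replaceLeftmost l r n T with
    | none => rw [B.runMerge_of_none h]; exact hT
    | some q =>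
      obtain ⟨p, T'⟩ := q
      rw [B.runMerge_succ_of_some h]
      exact ne_runMerge Hlr f T' (B.ne_replaceLeftmost Hlr h hT)

lemma runMerge_append {l r n : τ} (Hlr : B.dec n = B.dec l ++ B.dec r) :
    ∀ (N : ℕ) (T₁ T₂ : List τ), T₁.length + T₂.length = N →
      (∀ t ∈ T₁ ++ T₂, B.dec t ≠ []) →
      (∀ p ∈ (B.runMerge l r n N (T₁ ++ T₂)).2,
        ¬(p < (B.decodeSeq T₁).length ∧
          (B.decodeSeq T₁).length < p + (B.dec n).length)) →
      B.runMerge l r n N (T₁ ++ T₂) =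
        ((B.runMerge l r n T₁.length T₁).1 ++ (B.runMerge l r n T₂.length T₂).1,
          (B.runMerge l r n T₁.length T₁).2 ++
            (B.runMerge l r n T₂.length T₂).2.map (· + (B.decodeSeq T₁).length)) := by
  intro N
  induction N using Nat.strong_induction_on with
  | _ N IH =>
  intro T₁ T₂ hN Hne Hnc
  cases h0 : B.replaceLeftmost l r n (T₁ ++ T₂) with
  | none =>
    have h1 : B.replaceLeftmost l r n T₁ = none := by
      cases h1 : B.replaceLeftmost l r n T₁ with
      | none => rfl
      | some q =>
        obtain ⟨p, T₁'⟩ := q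
        rw [B.replaceLeftmost_append_some T₂ h1] at h0
        exact absurd h0 (by simp)
    have h2 : B.replaceLeftmost l r n T₂ = none := by
      rcases B.replaceLeftmost_append_none T₂ h1 with ⟨A, C, -, -, h3⟩ | hmap
      · rw [h3] at h0; exact absurd h0 (by simp)
      · rw [hmap] at h0
        exact Option.map_eq_none_iff.1 h0
    rw [B.runMerge_of_none h0, B.runMerge_of_none h1, B.runMerge_of_none h2]
    simp
  | some q =>
    obtain ⟨p, U'⟩ := q
    have hlen2 : 2 ≤ N := by
      obtain ⟨A, C, hA, -, -⟩ := B.replaceLeftmost_some h0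
      have : (T₁ ++ T₂).length = N := by rw [List.length_append]; exact hN
      rw [hA] at this
      simp at this
      omega
    obtain ⟨M, rfl⟩ : ∃ M, N = M + 1 := ⟨N - 1, by omega⟩
    rw [B.runMerge_succ_of_some h0]
    cases h1 : B.replaceLeftmost l r n T₁ with
    | some q1 =>
      obtain ⟨q, T₁'⟩ := q1
      have hc := B.replaceLeftmost_append_some T₂ h1
      rw [h0] at hc
      obtain ⟨hpq, hU'⟩ : p = q ∧ U' = T₁' ++ T₂ := by
        have := Option.some.inj hc
        exact ⟨congrArg Prod.fst this, congrArg Prod.snd this⟩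
      subst hpq hU'
      have hl : T₁'.length + 1 = T₁.length := B.replaceLeftmost_length h1
      have hdec : B.decodeSeq T₁' = B.decodeSeq T₁ :=
        B.decodeSeq_replaceLeftmost Hlr h1
      have hM : T₁'.length + T₂.length = M := by omega
      have Hne' : ∀ t ∈ T₁' ++ T₂, B.dec t ≠ [] :=
        B.ne_replaceLeftmost Hlr h0 Hne
      have hmem : ∀ p' ∈ (B.runMerge l r n M (T₁' ++ T₂)).2,
          p' ∈ (B.runMerge l r n (M + 1) (T₁ ++ T₂)).2 := by
        intro p' hp'
        rw [B.runMerge_succ_of_some h0]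
        exact List.mem_cons_of_mem _ hp'
      have Hnc' : ∀ p' ∈ (B.runMerge l r n M (T₁' ++ T₂)).2,
          ¬(p' < (B.decodeSeq T₁').length ∧
            (B.decodeSeq T₁').length < p' + (B.dec n).length) := by
        intro p' hp'
        rw [hdec]
        exact Hnc p' (hmem p' hp')
      have hIH := IH M (by omega) T₁' T₂ hM Hne' Hnc'
      rw [hIH, ← hl, B.runMerge_succ_of_some h1, hdec]
      simp
    | none =>
      rcases B.replaceLeftmost_append_none T₂ h1 with ⟨A, C, hA, hC, h3⟩ | hmap
      · -- junction case: contradiction with Hnc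
        rw [h0] at h3
        obtain ⟨hpA, hU'⟩ : (B.decodeSeq A).length = p ∧ A ++ n :: C = U' := by
          have := Option.some.inj h3
          exact ⟨(congrArg Prod.fst this).symm, (congrArg Prod.snd this).symm⟩
        exfalso
        have hpmem : p ∈ (B.runMerge l r n (M + 1) (T₁ ++ T₂)).2 := by
          rw [B.runMerge_succ_of_some h0]
          exact List.mem_cons_self
        refine Hnc p hpmem ⟨?_, ?_⟩
        · have hlne : B.dec l ≠ [] := Hne l (by rw [hA]; simp)
          rw [hA, ← hpA]
          simp
          exact List.length_pos_iff.2 hlne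
        · have hrne : B.dec r ≠ [] := Hne r (by rw [hC]; simp)
          have hln : (B.dec n).length = (B.dec l).length + (B.dec r).length := by
            rw [Hlr]; simp
          rw [hA, ← hpA, hln]
          simp
          exact List.length_pos_iff.2 hrne
      · rw [h0] at hmap
        cases h2 : B.replaceLeftmost l r n T₂ with
        | none => rw [h2] at hmap; exact absurd hmap.symm (by simp)
        | some q2 =>
          obtain ⟨q, T₂'⟩ := q2
          rw [h2] at hmap
          simp only [Option.map_some] at hmap
          obtain ⟨hpq, hU'⟩ : p = q + (B.decodeSeq T₁).length ∧ U' = T₁ ++ T₂' := by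
            have := Option.some.inj hmap
            exact ⟨congrArg Prod.fst this, congrArg Prod.snd this⟩
          subst hpq hU'
          have hl2 : T₂'.length + 1 = T₂.length := B.replaceLeftmost_length h2
          have hM : T₁.length + T₂'.length = M := by omega
          have Hne' : ∀ t ∈ T₁ ++ T₂', B.dec t ≠ [] :=
            B.ne_replaceLeftmost Hlr h0 Hne
          have hmem : ∀ p' ∈ (B.runMerge l r n M (T₁ ++ T₂')).2,
              p' ∈ (B.runMerge l r n (M + 1) (T₁ ++ T₂)).2 := by
            intro p' hp'
            rw [B.runMerge_succ_of_some h0]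
            exact List.mem_cons_of_mem _ hp'
          have Hnc' : ∀ p' ∈ (B.runMerge l r n M (T₁ ++ T₂')).2,
              ¬(p' < (B.decodeSeq T₁).length ∧
                (B.decodeSeq T₁).length < p' + (B.dec n).length) := by
            intro p' hp'
            exact Hnc p' (hmem p' hp')
          have hIH := IH M (by omega) T₁ T₂' hM Hne' Hnc'
          have hT₁fix : B.runMerge l r n T₁.length T₁ = (T₁, []) :=
            B.runMerge_of_none h1 _
          rw [hIH, ← hl2, B.runMerge_succ_of_some h2, hT₁fix]
          simp


lemma decodeSeq_map_base (S : List σ) : B.decodeSeq (S.map B.base) = S := by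
  induction S with
  | nil => rfl
  | cons a S ih => simp [B.dec_base, ih]

lemma ne_map_base (S : List σ) : ∀ t ∈ S.map B.base, B.dec t ≠ [] := by
  intro t ht
  obtain ⟨a, -, rfl⟩ := List.mem_map.1 ht
  simp [B.dec_base]

lemma enum_ok : ∀ x ∈ (B.merges.zipIdx.map Prod.swap), ∃ h : x.1 < B.merges.length, B.merges[x.1]'h = x.2 := by
  intro x hx
  obtain ⟨y, hy, rfl⟩ := List.mem_map.1 hx
  rw [List.mem_zipIdx_iff_getElem?] at hy
  have h : y.2 < B.merges.length := by
    by_contra h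
    rw [List.getElem?_eq_none (by omega)] at hy
    simp at hy
  exact ⟨h, by rw [List.getElem?_eq_getElem h] at hy; exact Option.some.inj hy⟩

lemma dec_merge_of_ok {i : ℕ} {l r n : τ} (hi : i < B.merges.length)
    (hm : B.merges[i]'hi = (l, r, n)) : B.dec n = B.dec l ++ B.dec r := by
  have h := B.dec_merge (B.merges[i]'hi) (B.merges.getElem_mem hi)
  rw [hm] at h
  exact h

lemma decodeSeq_encodeRunAux :
    ∀ (ms : List (ℕ × τ × τ × τ)),
      (∀ x ∈ ms, ∃ h : x.1 < B.merges.length, B.merges[x.1]'h = x.2) →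
      ∀ T, B.decodeSeq (B.encodeRunAux ms T).1 = B.decodeSeq T
  | [], _, T => rfl
  | (i, l, r, n) :: ms, hok, T => by
    obtain ⟨hi, hm⟩ := hok (i, l, r, n) (List.mem_cons_self)
    have Hlr : B.dec n = B.dec l ++ B.dec r := B.dec_merge_of_ok hi hm
    show B.decodeSeq (B.encodeRunAux ms (B.runMerge l r n T.length T).1).1 = B.decodeSeq T
    rw [decodeSeq_encodeRunAux ms (fun x hx => hok x (List.mem_cons_of_mem _ hx)),
        B.decodeSeq_runMerge Hlr]

lemma ne_encodeRunAux :
    ∀ (ms : List (ℕ × τ × τ × τ)),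
      (∀ x ∈ ms, ∃ h : x.1 < B.merges.length, B.merges[x.1]'h = x.2) →
      ∀ T, (∀ t ∈ T, B.dec t ≠ []) → ∀ t ∈ (B.encodeRunAux ms T).1, B.dec t ≠ []
  | [], _, T, hT => hT
  | (i, l, r, n) :: ms, hok, T, hT => by
    obtain ⟨hi, hm⟩ := hok (i, l, r, n) (List.mem_cons_self)
    have Hlr : B.dec n = B.dec l ++ B.dec r := B.dec_merge_of_ok hi hm
    show ∀ t ∈ (B.encodeRunAux ms (B.runMerge l r n T.length T).1).1, B.dec t ≠ []
    exact ne_encodeRunAux ms (fun x hx => hok x (List.mem_cons_of_mem _ hx)) _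
      (B.ne_runMerge Hlr _ _ hT)

lemma decodeSeq_encode (S : List σ) : B.decodeSeq (B.encode S) = S := by
  show B.decodeSeq (B.encodeRunAux (B.merges.zipIdx.map Prod.swap) (S.map B.base)).1 = S
  rw [B.decodeSeq_encodeRunAux (B.merges.zipIdx.map Prod.swap) B.enum_ok, decodeSeq_map_base]

lemma encodeRunAux_append :
    ∀ (ms : List (ℕ × τ × τ × τ)),
      (∀ x ∈ ms, ∃ h : x.1 < B.merges.length, B.merges[x.1]'h = x.2) →
      ∀ (T₁ T₂ : List τ), (∀ t ∈ T₁ ++ T₂, B.dec t ≠ []) →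
      (∀ app ∈ (B.encodeRunAux ms (T₁ ++ T₂)).2,
        ¬ B.AppCrosses app (B.decodeSeq T₁).length) →
      (B.encodeRunAux ms (T₁ ++ T₂)).1 =
        (B.encodeRunAux ms T₁).1 ++ (B.encodeRunAux ms T₂).1
  | [], _, T₁, T₂, _, _ => rfl
  | (i, l, r, n) :: ms, hok, T₁, T₂, Hne, Hnc => by
    obtain ⟨hi, hm⟩ := hok (i, l, r, n) (List.mem_cons_self)
    have Hlr : B.dec n = B.dec l ++ B.dec r := B.dec_merge_of_ok hi hm
    have hok' := fun x hx => hok x (List.mem_cons_of_mem _ hx)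
    have hlen : T₁.length + T₂.length = (T₁ ++ T₂).length := List.length_append.symm
    have happs : (B.encodeRunAux ((i, l, r, n) :: ms) (T₁ ++ T₂)).2 =
        (B.runMerge l r n (T₁ ++ T₂).length (T₁ ++ T₂)).2.map (fun p => (i, p)) ++
        (B.encodeRunAux ms (B.runMerge l r n (T₁ ++ T₂).length (T₁ ++ T₂)).1).2 := rfl
    have Hnc1 : ∀ p ∈ (B.runMerge l r n (T₁ ++ T₂).length (T₁ ++ T₂)).2,
        ¬(p < (B.decodeSeq T₁).length ∧
          (B.decodeSeq T₁).length < p + (B.dec n).length) := by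
      intro p hp hcontra
      refine Hnc (i, p) ?_ ⟨hi, hcontra.1, by rw [hm]; exact hcontra.2⟩
      rw [happs]
      exact List.mem_append_left _ (List.mem_map.2 ⟨p, hp, rfl⟩)
    have hRM := B.runMerge_append Hlr (T₁ ++ T₂).length T₁ T₂ hlen Hne Hnc1
    have hq1 : (B.runMerge l r n (T₁ ++ T₂).length (T₁ ++ T₂)).1 =
        (B.runMerge l r n T₁.length T₁).1 ++ (B.runMerge l r n T₂.length T₂).1 := by
      rw [hRM]
    have hdec1 : B.decodeSeq (B.runMerge l r n T₁.length T₁).1 = B.decodeSeq T₁ :=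
      B.decodeSeq_runMerge Hlr _ _
    have hne' : ∀ t ∈ (B.runMerge l r n T₁.length T₁).1 ++ (B.runMerge l r n T₂.length T₂).1,
        B.dec t ≠ [] := by
      rw [← hq1]
      exact B.ne_runMerge Hlr _ _ Hne
    have Hnc2 : ∀ app ∈ (B.encodeRunAux ms
        ((B.runMerge l r n T₁.length T₁).1 ++ (B.runMerge l r n T₂.length T₂).1)).2,
        ¬ B.AppCrosses app (B.decodeSeq (B.runMerge l r n T₁.length T₁).1).length := by
      intro app happ
      rw [hdec1]
      refine Hnc app ?_
      rw [happs, ← hq1] at *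
      exact List.mem_append_right _ happ
    have hIH := encodeRunAux_append ms hok'
      (B.runMerge l r n T₁.length T₁).1 (B.runMerge l r n T₂.length T₂).1 hne' Hnc2
    show (B.encodeRunAux ms (B.runMerge l r n (T₁ ++ T₂).length (T₁ ++ T₂)).1).1 =
        (B.encodeRunAux ms (B.runMerge l r n T₁.length T₁).1).1 ++
        (B.encodeRunAux ms (B.runMerge l r n T₂.length T₂).1).1
    rw [hq1, hIH]

lemma encode_append_of_no_cross {S₁ S₂ : List σ}
    (h : ¬ B.MergeCrossesInRun (S₁ ++ S₂) S₁.length) :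
    B.encode (S₁ ++ S₂) = B.encode S₁ ++ B.encode S₂ := by
  have hc : (B.decodeSeq (S₁.map B.base)).length = S₁.length := by
    rw [decodeSeq_map_base]
  show (B.encodeRunAux (B.merges.zipIdx.map Prod.swap) ((S₁ ++ S₂).map B.base)).1 =
      (B.encodeRunAux (B.merges.zipIdx.map Prod.swap) (S₁.map B.base)).1 ++
      (B.encodeRunAux (B.merges.zipIdx.map Prod.swap) (S₂.map B.base)).1
  rw [List.map_append]
  refine B.encodeRunAux_append (B.merges.zipIdx.map Prod.swap) B.enum_ok _ _ ?_ ?_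
  · rw [← List.map_append]
    exact B.ne_map_base (S₁ ++ S₂)
  · intro app happ hcr
    refine h ⟨app, ?_, ?_⟩
    · show app ∈ (B.encodeRunAux (B.merges.zipIdx.map Prod.swap) ((S₁ ++ S₂).map B.base)).2
      rw [List.map_append]
      exact happ
    · rw [← hc]
      exact hcr

/-- The token sequence `U` has a token (given as a decomposition) whose byte
span properly contains `c`. -/
def CrossTok (B : BPE σ τ) (U : List τ) (c : ℕ) : Prop :=
  ∃ U₁ t U₂, U = U₁ ++ t :: U₂ ∧ (B.decodeSeq U₁).length < c ∧
    c < (B.decodeSeq U₁).length + (B.dec t).length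

lemma not_crossTok_append (T₁ T₂ : List τ) :
    ¬ B.CrossTok (T₁ ++ T₂) (B.decodeSeq T₁).length := by
  rintro ⟨U₁, t, U₂, heq, h1, h2⟩
  rcases List.append_eq_append_iff.1 heq with ⟨a, ha1, ha2⟩ | ⟨a, ha1, ha2⟩
  · rw [ha1] at h1
    simp at h1
  · cases a with
    | nil =>
      rw [ha1] at h1
      simp at h1
    | cons x a' =>
      rw [List.cons_append] at ha2
      obtain ⟨rfl, -⟩ := List.cons.inj ha2
      rw [ha1] at h2
      simp only [decodeSeq_append, decodeSeq_cons, decodeSeq_nil,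
        List.length_append, List.length_nil] at h2
      omega

lemma crossTok_replaceLeftmost {l r n : τ} (Hlr : B.dec n = B.dec l ++ B.dec r)
    {U : List τ} {p c : ℕ} {U' : List τ}
    (h : B.replaceLeftmost l r n U = some (p, U'))
    (hc : B.CrossTok U c) : B.CrossTok U' c := by
  obtain ⟨A, C, hU, hU', -⟩ := B.replaceLeftmost_some h
  obtain ⟨U₁, t, U₂, heq, h1, h2⟩ := hc
  have hln : (B.dec n).length = (B.dec l).length + (B.dec r).length := by
    rw [Hlr]; simp
  rw [hU] at heq
  rcases List.append_eq_append_iff.1 heq.symm with ⟨a, ha1, ha2⟩ | ⟨a, ha1, ha2⟩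
  · -- A = U₁ ++ a, t :: U₂ = a ++ l :: r :: C
    cases a with
    | nil =>
      rw [List.nil_append] at ha2
      rw [List.append_nil] at ha1
      obtain ⟨rfl, rfl⟩ := List.cons.inj ha2
      subst ha1
      refine ⟨A, n, C, hU', h1, ?_⟩
      omega
    | cons x a' =>
      rw [List.cons_append] at ha2
      obtain ⟨rfl, ha2'⟩ := List.cons.inj ha2
      refine ⟨U₁, t, a' ++ n :: C, ?_, h1, h2⟩
      rw [hU', ha1]
      simp
  · -- U₁ = A ++ a, l :: r :: C = a ++ t :: U₂
    cases a with
    | nil =>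
      rw [List.nil_append] at ha2
      rw [List.append_nil] at ha1
      obtain ⟨rfl, rfl⟩ := List.cons.inj ha2
      subst ha1
      refine ⟨U₁, n, C, hU', h1, ?_⟩
      omega
    | cons x a' =>
      rw [List.cons_append] at ha2
      obtain ⟨rfl, ha2'⟩ := List.cons.inj ha2
      cases a' with
      | nil =>
        rw [List.nil_append] at ha2'
        obtain ⟨rfl, rfl⟩ := List.cons.inj ha2'
        subst ha1
        refine ⟨A, n, C, hU', ?_, ?_⟩ <;>
          simp only [decodeSeq_append, decodeSeq_cons, decodeSeq_nil,
            List.length_append, List.length_nil, hln] at h1 h2 ⊢ <;> omega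
      | cons y a'' =>
        rw [List.cons_append] at ha2'
        obtain ⟨rfl, ha3⟩ := List.cons.inj ha2'
        subst ha1 ha3
        refine ⟨A ++ n :: a'', t, U₂, ?_, ?_, ?_⟩
        · rw [hU']
          simp
        · simp only [decodeSeq_append, decodeSeq_cons, decodeSeq_nil,
            List.length_append, List.length_nil, hln] at h1 ⊢
          omega
        · simp only [decodeSeq_append, decodeSeq_cons, decodeSeq_nil,
            List.length_append, List.length_nil, hln] at h2 ⊢
          omega

lemma crossTok_of_cross_replace {l r n : τ} {U : List τ} {p c : ℕ} {U' : List τ}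
    (h : B.replaceLeftmost l r n U = some (p, U'))
    (hp1 : p < c) (hp2 : c < p + (B.dec n).length) : B.CrossTok U' c := by
  obtain ⟨A, C, -, hU', hA⟩ := B.replaceLeftmost_some h
  exact ⟨A, n, C, hU', by omega, by omega⟩

lemma crossTok_runMerge {l r n : τ} (Hlr : B.dec n = B.dec l ++ B.dec r) {c : ℕ} :
    ∀ (f : ℕ) (U : List τ),
      ((∃ p ∈ (B.runMerge l r n f U).2, p < c ∧ c < p + (B.dec n).length) ∨ B.CrossTok U c) →
      B.CrossTok (B.runMerge l r n f U).1 c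
  | 0, U, h => by
    rcases h with ⟨p, hp, -⟩ | h
    · simp [runMerge] at hp
    · exact h
  | f + 1, U, h => by
    cases h0 : B.replaceLeftmost l r n U with
    | none =>
      rw [B.runMerge_of_none h0] at h ⊢
      rcases h with ⟨p, hp, -⟩ | h
      · simp at hp
      · exact h
    | some q =>
      obtain ⟨p, U'⟩ := q
      rw [B.runMerge_succ_of_some h0] at h ⊢
      rcases h with ⟨p', hp', hcr⟩ | h
      · rcases List.mem_cons.1 hp' with rfl | hp'
        · exact crossTok_runMerge Hlr f U'
            (Or.inr (B.crossTok_of_cross_replace h0 hcr.1 hcr.2))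
        · exact crossTok_runMerge Hlr f U' (Or.inl ⟨p', hp', hcr⟩)
      · exact crossTok_runMerge Hlr f U'
          (Or.inr (B.crossTok_replaceLeftmost Hlr h0 h))

lemma crossTok_encodeRunAux {c : ℕ} :
    ∀ (ms : List (ℕ × τ × τ × τ)),
      (∀ x ∈ ms, ∃ h : x.1 < B.merges.length, B.merges[x.1]'h = x.2) →
      ∀ T : List τ,
      ((∃ app ∈ (B.encodeRunAux ms T).2, B.AppCrosses app c) ∨ B.CrossTok T c) →
      B.CrossTok (B.encodeRunAux ms T).1 c
  | [], _, T, h => by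
    rcases h with ⟨app, happ, -⟩ | h
    · simp [encodeRunAux] at happ
    · exact h
  | (i, l, r, n) :: ms, hok, T, h => by
    obtain ⟨hi, hm⟩ := hok (i, l, r, n) (List.mem_cons_self)
    have Hlr : B.dec n = B.dec l ++ B.dec r := B.dec_merge_of_ok hi hm
    have hok' := fun x hx => hok x (List.mem_cons_of_mem _ hx)
    show B.CrossTok (B.encodeRunAux ms (B.runMerge l r n T.length T).1).1 c
    have happs : (B.encodeRunAux ((i, l, r, n) :: ms) T).2 =
        (B.runMerge l r n T.length T).2.map (fun p => (i, p)) ++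
        (B.encodeRunAux ms (B.runMerge l r n T.length T).1).2 := rfl
    rcases h with ⟨app, happ, hcr⟩ | h
    · rw [happs] at happ
      rcases List.mem_append.1 happ with happ | happ
      · obtain ⟨p, hp, rfl⟩ := List.mem_map.1 happ
        obtain ⟨hlt, hcr1, hcr2⟩ := hcr
        have hm' : (B.merges[i]'hlt) = (l, r, n) := hm
        rw [hm'] at hcr2
        refine crossTok_encodeRunAux ms hok' _ (Or.inr ?_)
        exact B.crossTok_runMerge Hlr _ _ (Or.inl ⟨p, hp, hcr1, hcr2⟩)
      · exact crossTok_encodeRunAux ms hok' _ (Or.inl ⟨app, happ, hcr⟩)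
    · refine crossTok_encodeRunAux ms hok' _ (Or.inr ?_)
      exact B.crossTok_runMerge Hlr _ _ (Or.inr h)

end BPE

/-- Let `S₁`, `S₂` be byte strings with `T₁ = encode S₁`, `T₂ = encode S₂`.
Then `T₁ ++ T₂` is a valid token sequence if and only if no merge applied
during the run of `encode` on `S₁ ++ S₂` crosses position `|S₁|`. -/
theorem BPE.concat_valid_iff_no_crossing_merge {σ τ : Type*} [DecidableEq τ]
    (B : BPE σ τ) (hNF : B.NormalForm) (S₁ S₂ : List σ) :
    B.Valid (B.encode S₁ ++ B.encode S₂) ↔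
      ¬ B.MergeCrossesInRun (S₁ ++ S₂) S₁.length := by
  constructor
  · intro hV hM
    obtain ⟨app, happ, hcr⟩ := hM
    have happ' : app ∈ (B.encodeRunAux (B.merges.zipIdx.map Prod.swap) ((S₁ ++ S₂).map B.base)).2 := happ
    have henc : B.encode (S₁ ++ S₂) = B.encode S₁ ++ B.encode S₂ := by
      have hd : B.decodeSeq (B.encode S₁ ++ B.encode S₂) = S₁ ++ S₂ := by
        rw [decodeSeq_append, decodeSeq_encode, decodeSeq_encode]
      have h := hV
      unfold Valid at h
      rw [hd] at h
      exact h
    have hcross : B.CrossTok (B.encode (S₁ ++ S₂)) S₁.length := by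
      show B.CrossTok (B.encodeRunAux (B.merges.zipIdx.map Prod.swap) ((S₁ ++ S₂).map B.base)).1 S₁.length
      exact B.crossTok_encodeRunAux (B.merges.zipIdx.map Prod.swap) B.enum_ok _ (Or.inl ⟨app, happ', hcr⟩)
    rw [henc] at hcross
    have hnc := B.not_crossTok_append (B.encode S₁) (B.encode S₂)
    rw [decodeSeq_encode] at hnc
    exact hnc hcross
  · intro h
    show B.encode (B.decodeSeq (B.encode S₁ ++ B.encode S₂)) = _
    rw [decodeSeq_append, decodeSeq_encode, decodeSeq_encode]
    exact B.encode_append_of_no_cross h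
end

section
/- Let [t₁, …, tᵢ] be a valid token sequence with i ≥ 1 and let tᵢ₊₁ ∈ V. If the pair [tᵢ, tᵢ₊₁] is valid, then the sequence [t₁, …, tᵢ, tᵢ₊₁] is valid. -/
set_option linter.unusedSectionVars false

namespace BPEAux

variable {σ τ : Type*} [DecidableEq τ]

/-- position-free version of `replaceLeftmost`. -/
def step (l r n : τ) : List τ → Option (List τ)
  | [] => none
  | [_] => none
  | t :: u :: rest =>
      if t = l ∧ u = r then some (n :: rest)
      else (step l r n (u :: rest)).map (t :: ·)

def iter (l r n : τ) : ℕ → List τ → List τ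
  | 0, T => T
  | f + 1, T =>
    match step l r n T with
    | none => T
    | some T' => iter l r n f T'

/-- exhaust a single merge. -/
def Ex (l r n : τ) (T : List τ) : List τ := iter l r n T.length T

/-- process a list of merges in order. -/
def runAll : List (τ × τ × τ) → List τ → List τ
  | [], T => T
  | m :: ms, T => runAll ms (Ex m.1 m.2.1 m.2.2 T)

inductive Reach (l r n : τ) : List τ → List τ → Prop
  | refl (T) : Reach l r n T T
  | tail {T T' W} : step l r n T = some T' → Reach l r n T' W → Reach l r n T W

theorem step_length {l r n : τ} : ∀ {T T' : List τ},
    step l r n T = some T' → T'.length + 1 = T.length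
  | [], _, h => by simp [step] at h
  | [_], _, h => by simp [step] at h
  | t :: u :: rest, T', h => by
    by_cases htu : t = l ∧ u = r
    · simp only [step, if_pos htu] at h
      cases h; simp
    · simp only [step, if_neg htu] at h
      cases h2 : step l r n (u :: rest) with
      | none => rw [h2] at h; simp at h
      | some A₂ =>
        rw [h2] at h
        simp only [Option.map_some] at h
        cases h
        have := step_length h2
        simp only [List.length_cons] at this ⊢
        omega

theorem step_decomp {l r n : τ} : ∀ {T T' : List τ},
    step l r n T = some T' → ∃ A C, T = A ++ l :: r :: C ∧ T' = A ++ n :: C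
  | [], _, h => by simp [step] at h
  | [_], _, h => by simp [step] at h
  | t :: u :: rest, T', h => by
    by_cases htu : t = l ∧ u = r
    · simp only [step, if_pos htu] at h
      cases h
      exact ⟨[], rest, by simp [htu.1, htu.2], by simp⟩
    · simp only [step, if_neg htu] at h
      cases h2 : step l r n (u :: rest) with
      | none => rw [h2] at h; simp at h
      | some A₂ =>
        rw [h2] at h
        simp only [Option.map_some] at h
        cases h
        obtain ⟨A, C, hT, hT'⟩ := step_decomp h2
        exact ⟨t :: A, C, by simp [hT], by simp [hT']⟩

theorem step_some_ne_nil {l r n : τ} {T T' : List τ} (h : step l r n T = some T') :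
    T' ≠ [] := by
  obtain ⟨A, C, _, rfl⟩ := step_decomp h
  simp

theorem iter_of_none {l r n : τ} {T : List τ} (h : step l r n T = none) :
    ∀ f, iter l r n f T = T := by
  intro f; cases f <;> simp [iter, h]

theorem Ex_of_none {l r n : τ} {T : List τ} (h : step l r n T = none) :
    Ex l r n T = T := iter_of_none h _

theorem Ex_step {l r n : τ} {T T' : List τ} (h : step l r n T = some T') :
    Ex l r n T = Ex l r n T' := by
  have hl := step_length h
  unfold Ex
  rw [← hl]
  simp [iter, h]

theorem step_induction {l r n : τ} {motive : List τ → Prop}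
    (ih : ∀ T, (∀ T', step l r n T = some T' → motive T') → motive T) (T : List τ) :
    motive T := by
  have key : ∀ k T, List.length T ≤ k → motive T := by
    intro k
    induction k with
    | zero =>
      intro T hT
      exact ih T (fun T' h' => by have := step_length h'; omega)
    | succ k IH =>
      intro T hT
      exact ih T (fun T' h' => IH T' (by have := step_length h'; omega))
  exact key T.length T le_rfl

theorem step_Ex {l r n : τ} (T : List τ) : step l r n (Ex l r n T) = none := by
  induction T using step_induction with
  | ih T ih =>
    cases h : step l r n T with
    | none => rw [Ex_of_none h]; exact h
    | some T' => rw [Ex_step h]; exact ih T' h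

theorem Ex_Ex {l r n : τ} (T : List τ) : Ex l r n (Ex l r n T) = Ex l r n T :=
  Ex_of_none (step_Ex T)

theorem step_append_some {l r n : τ} {A A' : List τ} (Bl : List τ)
    (h : step l r n A = some A') : step l r n (A ++ Bl) = some (A' ++ Bl) := by
  induction A generalizing A' with
  | nil => simp [step] at h
  | cons t A ih =>
    cases A with
    | nil => simp [step] at h
    | cons u rest =>
      by_cases htu : t = l ∧ u = r
      · simp only [step, if_pos htu] at h
        cases h
        simp only [List.cons_append, step, if_pos htu]
      · simp only [step, if_neg htu] at h
        cases h2 : step l r n (u :: rest) with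
        | none => rw [h2] at h; simp at h
        | some A₂ =>
          rw [h2] at h
          simp only [Option.map_some] at h
          cases h
          have := ih (A' := A₂) h2
          simp only [List.cons_append] at this ⊢
          simp only [step, if_neg htu, this, Option.map_some]

theorem step_append_none {l r n : τ} {A : List τ} (Bl : List τ)
    (hA : step l r n A = none) (hb : ¬(A.getLast? = some l ∧ Bl.head? = some r)) :
    step l r n (A ++ Bl) = (step l r n Bl).map (A ++ ·) := by
  induction A with
  | nil =>
    simp only [List.nil_append]
    cases h : step l r n Bl <;> simp [h]
  | cons t A ih =>
    cases A with
    | nil =>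
      cases Bl with
      | nil => simp [step]
      | cons b B' =>
        have hne : ¬(t = l ∧ b = r) := by
          intro ⟨h1, h2⟩; exact hb ⟨by simp [h1], by simp [h2]⟩
        simp only [List.singleton_append, step, if_neg hne]
    | cons u rest =>
      have h1 : ¬(t = l ∧ u = r) := by
        intro h; simp [step, if_pos h] at hA
      have h2 : step l r n (u :: rest) = none := by
        simp only [step, if_neg h1, Option.map_eq_none_iff] at hA
        exact hA
      have hb2 : ¬((u :: rest).getLast? = some l ∧ Bl.head? = some r) := by
        intro ⟨ha, hc⟩
        exact hb ⟨by rw [List.getLast?_cons_cons]; exact ha, hc⟩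
      have := ih h2 hb2
      simp only [List.cons_append] at this ⊢
      simp only [step, if_neg h1]
      rw [this]
      cases h : step l r n Bl <;> simp [h]

theorem step_append_cross {l r n : τ} {A Bl : List τ}
    (hA : step l r n A = none) (hAl : A.getLast? = some l) (hBr : Bl.head? = some r) :
    step l r n (A ++ Bl) = some (A.dropLast ++ n :: Bl.tail) := by
  induction A with
  | nil => simp at hAl
  | cons t A ih =>
    cases A with
    | nil =>
      simp only [List.getLast?_singleton, Option.some.injEq] at hAl
      subst hAl
      cases Bl with
      | nil => simp at hBr
      | cons b B' =>
        simp only [List.head?_cons, Option.some.injEq] at hBr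
        subst hBr
        simp [step]
    | cons u rest =>
      have h1 : ¬(t = l ∧ u = r) := by
        intro h; simp [step, if_pos h] at hA
      have h2 : step l r n (u :: rest) = none := by
        simp only [step, if_neg h1, Option.map_eq_none_iff] at hA
        exact hA
      have hAl2 : (u :: rest).getLast? = some l := by
        rw [List.getLast?_cons_cons] at hAl; exact hAl
      have := ih h2 hAl2
      simp only [List.cons_append] at this ⊢
      simp only [step, if_neg h1, this, Option.map_some]
      rfl

theorem step_append_cases {l r n : τ} {A Bl S' : List τ}
    (h : step l r n (A ++ Bl) = some S') :
    (∃ A', step l r n A = some A' ∧ S' = A' ++ Bl) ∨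
    (step l r n A = none ∧ A.getLast? = some l ∧ Bl.head? = some r ∧
      S' = A.dropLast ++ n :: Bl.tail) ∨
    (step l r n A = none ∧ ∃ B', step l r n Bl = some B' ∧ S' = A ++ B') := by
  cases hA : step l r n A with
  | some A' =>
    left
    refine ⟨A', rfl, ?_⟩
    rw [step_append_some Bl hA] at h
    exact (Option.some.inj h).symm
  | none =>
    by_cases hb : A.getLast? = some l ∧ Bl.head? = some r
    · right; left
      rw [step_append_cross hA hb.1 hb.2] at h
      exact ⟨rfl, hb.1, hb.2, (Option.some.inj h).symm⟩
    · right; right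
      rw [step_append_none Bl hA hb] at h
      cases hB : step l r n Bl with
      | none => rw [hB] at h; simp at h
      | some B' =>
        rw [hB] at h
        simp only [Option.map_some] at h
        exact ⟨rfl, B', rfl, (Option.some.inj h).symm⟩

theorem Ex_append_left {l r n : τ} (Bl : List τ) (A : List τ) :
    Ex l r n (A ++ Bl) = Ex l r n (Ex l r n A ++ Bl) := by
  induction A using step_induction with
  | ih A ih =>
    cases h : step l r n A with
    | none => rw [Ex_of_none h]
    | some A' =>
      rw [Ex_step (step_append_some Bl h), Ex_step h]
      exact ih A' h

theorem Ex_append_of {l r n : τ} {A : List τ} (hA : step l r n A = none) (Bl : List τ) :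
    (∀ W, Reach l r n Bl W → ¬(A.getLast? = some l ∧ W.head? = some r)) →
      Ex l r n (A ++ Bl) = A ++ Ex l r n Bl := by
  induction Bl using step_induction with
  | ih Bl ih =>
    intro Hb
    have hbnd : ¬(A.getLast? = some l ∧ Bl.head? = some r) := Hb Bl (Reach.refl Bl)
    have hstep := step_append_none Bl hA hbnd
    cases h : step l r n Bl with
    | none =>
      rw [h] at hstep
      simp only [Option.map_none] at hstep
      rw [Ex_of_none hstep, Ex_of_none h]
    | some B₂ =>
      rw [h] at hstep
      simp only [Option.map_some] at hstep
      rw [Ex_step hstep, Ex_step h]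
      exact ih B₂ h (fun W hW => Hb W (Reach.tail h hW))


section WithB

variable (B : BPE σ τ)

theorem decodeSeq_nil : B.decodeSeq ([] : List τ) = [] := rfl

theorem decodeSeq_cons (t : τ) (T : List τ) :
    B.decodeSeq (t :: T) = B.dec t ++ B.decodeSeq T := by
  simp [BPE.decodeSeq]

theorem decodeSeq_append (T U : List τ) :
    B.decodeSeq (T ++ U) = B.decodeSeq T ++ B.decodeSeq U := by
  simp [BPE.decodeSeq]

theorem decodeSeq_singleton (t : τ) : B.decodeSeq [t] = B.dec t := by
  simp [BPE.decodeSeq]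

variable {l r n : τ}

theorem step_decodeSeq (hn : B.dec n = B.dec l ++ B.dec r) {T T' : List τ}
    (h : step l r n T = some T') : B.decodeSeq T' = B.decodeSeq T := by
  obtain ⟨A, C, rfl, rfl⟩ := step_decomp h
  simp [decodeSeq_append, decodeSeq_cons, hn, List.append_assoc]

theorem Ex_decodeSeq (hn : B.dec n = B.dec l ++ B.dec r) (T : List τ) :
    B.decodeSeq (Ex l r n T) = B.decodeSeq T := by
  induction T using step_induction with
  | ih T ih =>
    cases h : step l r n T with
    | none => rw [Ex_of_none h]
    | some T' => rw [Ex_step h, ih T' h, step_decodeSeq B hn h]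

/-- some token of `S` has byte span properly containing `c`. -/
def Crosses (c : ℕ) (S : List τ) : Prop :=
  ∃ U u V, S = U ++ u :: V ∧ (B.decodeSeq U).length < c ∧
    c < (B.decodeSeq U).length + (B.dec u).length

theorem not_crosses_append (S₁ S₂ : List τ) :
    ¬ Crosses B (B.decodeSeq S₁).length (S₁ ++ S₂) := by
  rintro ⟨U, u, V, hS, h1, h2⟩
  rcases List.append_eq_append_iff.mp hS with ⟨a', ha, hb⟩ | ⟨c', hc, hd⟩
  · rw [ha, decodeSeq_append, List.length_append] at h1
    omega
  · cases c' with
    | nil =>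
      rw [hc, List.append_nil] at h1
      exact lt_irrefl _ h1
    | cons x c'' =>
      obtain ⟨rfl, rfl⟩ : u = x ∧ V = c'' ++ S₂ := by
        simpa using congrArg (fun z => (z.head?, z.tail)) hd
      rw [hc, decodeSeq_append, decodeSeq_cons] at h2
      simp only [List.length_append] at h2
      omega

theorem crosses_step (hn : B.dec n = B.dec l ++ B.dec r) {c : ℕ} {T T' : List τ}
    (hc : Crosses B c T) (h : step l r n T = some T') : Crosses B c T' := by
  obtain ⟨A, C, hT, hT'⟩ := step_decomp h
  obtain ⟨U, u, V, hS, h1, h2⟩ := hc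
  rw [hT] at hS
  subst hT'
  rcases List.append_eq_append_iff.mp hS with ⟨a', ha, hb⟩ | ⟨c', hc', hd⟩
  · -- U = A ++ a', l :: r :: C = a' ++ u :: V
    cases a' with
    | nil =>
      simp only [List.append_nil] at ha
      subst ha
      simp only [List.nil_append] at hb
      injection hb with hul hb2
      subst hul
      subst hb2
      refine ⟨U, n, C, rfl, h1, ?_⟩
      simp only [hn, List.length_append] at h2 ⊢
      omega
    | cons x a'' =>
      rw [List.cons_append] at hb
      injection hb with hx hb2
      subst hx
      cases a'' with
      | nil =>
        simp only [List.nil_append] at hb2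
        injection hb2 with hur hb3
        subst hur
        subst hb3
        subst ha
        refine ⟨A, n, C, rfl, ?_, ?_⟩ <;>
        · simp only [decodeSeq_append, decodeSeq_singleton, List.length_append,
            hn] at h1 h2 ⊢
          omega
      | cons y a''' =>
        rw [List.cons_append] at hb2
        injection hb2 with hy hb3
        subst hy
        subst hb3
        subst ha
        refine ⟨A ++ n :: a''', u, V, by simp, ?_, ?_⟩ <;>
        · simp only [decodeSeq_append, decodeSeq_cons, List.length_append,
            hn] at h1 h2 ⊢
          omega
  · -- A = U ++ c', u :: V = c' ++ l :: r :: C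
    cases c' with
    | nil =>
      simp only [List.append_nil] at hc'
      subst hc'
      simp only [List.nil_append] at hd
      injection hd with hul hd2
      subst hul
      subst hd2
      refine ⟨A, n, C, rfl, h1, ?_⟩
      simp only [hn, List.length_append] at h2 ⊢
      omega
    | cons x c'' =>
      rw [List.cons_append] at hd
      injection hd with hux hd2
      subst hux
      subst hd2
      subst hc'
      exact ⟨U, u, c'' ++ n :: C, by simp, h1, h2⟩

theorem crosses_Ex (hn : B.dec n = B.dec l ++ B.dec r) {c : ℕ} (T : List τ)
    (hc : Crosses B c T) : Crosses B c (Ex l r n T) := by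
  induction T using step_induction with
  | ih T ih =>
    cases h : step l r n T with
    | none => rwa [Ex_of_none h]
    | some T' => rw [Ex_step h]; exact ih T' h (crosses_step B hn hc h)

theorem crosses_boundary (hn : B.dec n = B.dec l ++ B.dec r) (hl : B.dec l ≠ [])
    (hr : B.dec r ≠ []) {A : List τ} (hAl : A.getLast? = some l) (Bt : List τ) :
    Crosses B (B.decodeSeq A).length (A.dropLast ++ n :: Bt) := by
  obtain ⟨A₀, rfl⟩ := List.getLast?_eq_some_iff.mp hAl
  have hdl : (A₀ ++ [l]).dropLast = A₀ := by simp
  have h1 := List.length_pos_iff.mpr hl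
  have h2 := List.length_pos_iff.mpr hr
  refine ⟨A₀, n, Bt, by rw [hdl], ?_, ?_⟩ <;>
  · simp only [decodeSeq_append, decodeSeq_singleton, List.length_append, hn]
    omega

theorem crosses_now (hn : B.dec n = B.dec l ++ B.dec r) (hl : B.dec l ≠ [])
    (hr : B.dec r ≠ []) {A Bl : List τ} (hA : step l r n A = none)
    (hAl : A.getLast? = some l) (hBr : Bl.head? = some r) :
    Crosses B (B.decodeSeq A).length (Ex l r n (A ++ Bl)) := by
  rw [Ex_step (step_append_cross hA hAl hBr)]
  exact crosses_Ex B hn _ (crosses_boundary B hn hl hr hAl Bl.tail)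

theorem crosses_of_reach (hn : B.dec n = B.dec l ++ B.dec r) (hl : B.dec l ≠ [])
    (hr : B.dec r ≠ []) {A : List τ} (hA : step l r n A = none)
    (hAl : A.getLast? = some l) {Bl W : List τ} (hre : Reach l r n Bl W) :
    W.head? = some r → Crosses B (B.decodeSeq A).length (Ex l r n (A ++ Bl)) := by
  induction hre with
  | refl T => exact fun hW => crosses_now B hn hl hr hA hAl hW
  | @tail T T' W hstep hre2 ih =>
    intro hW
    by_cases hBr : T.head? = some r
    · exact crosses_now B hn hl hr hA hAl hBr
    · have hs : step l r n (A ++ T) = some (A ++ T') := by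
        rw [step_append_none T hA (fun hh => hBr hh.2), hstep]
        rfl
      rw [Ex_step hs]
      exact ih hW

theorem reach_head (hn : B.dec n = B.dec l ++ B.dec r) (hl : B.dec l ≠ [])
    (hr : B.dec r ≠ []) {S W : List τ} (hre : Reach l r n S W) :
    ∀ A Bl : List τ, S = A ++ Bl → A ≠ [] →
      ¬ Crosses B (B.decodeSeq A).length (Ex l r n S) →
      ∃ A', Reach l r n A A' ∧ A' ≠ [] ∧ W.head? = A'.head? := by
  induction hre with
  | refl T =>
    intro A Bl hS hA hnc
    refine ⟨A, Reach.refl A, hA, ?_⟩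
    subst hS
    cases A with
    | nil => simp at hA
    | cons a A' => simp
  | @tail T T' W hstep hre2 ih =>
    intro A Bl hS hA hnc
    subst hS
    rcases step_append_cases hstep with ⟨A₂, hA₂, rfl⟩ | ⟨hnone, hAl, hBr, rfl⟩ |
        ⟨hnone, B₂, hB₂, rfl⟩
    · have hEx : Ex l r n (A ++ Bl) = Ex l r n (A₂ ++ Bl) :=
        Ex_step (step_append_some Bl hA₂)
      have hdec2 : B.decodeSeq A₂ = B.decodeSeq A := step_decodeSeq B hn hA₂
      obtain ⟨A', ha1, ha2, ha3⟩ := ih A₂ Bl rfl (step_some_ne_nil hA₂)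
        (by rw [hdec2, ← hEx]; exact hnc)
      exact ⟨A', Reach.tail hA₂ ha1, ha2, ha3⟩
    · exact absurd (by
        rw [Ex_step hstep]
        exact crosses_Ex B hn _ (crosses_boundary B hn hl hr hAl Bl.tail)) hnc
    · have hEx : Ex l r n (A ++ Bl) = Ex l r n (A ++ B₂) := Ex_step hstep
      exact ih A B₂ rfl hA (by rw [← hEx]; exact hnc)

theorem Ex_append_dichotomy (hn : B.dec n = B.dec l ++ B.dec r) (hl : B.dec l ≠ [])
    (hr : B.dec r ≠ []) (A Bl : List τ) :
    Ex l r n (A ++ Bl) = Ex l r n A ++ Ex l r n Bl ∨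
      Crosses B (B.decodeSeq A).length (Ex l r n (A ++ Bl)) := by
  have key : ∀ A : List τ, step l r n A = none → ∀ Bl : List τ,
      Ex l r n (A ++ Bl) = A ++ Ex l r n Bl ∨
        Crosses B (B.decodeSeq A).length (Ex l r n (A ++ Bl)) := by
    intro A hA Bl
    induction Bl using step_induction with
    | ih Bl ih =>
      by_cases hb : A.getLast? = some l ∧ Bl.head? = some r
      · exact Or.inr (crosses_now B hn hl hr hA hb.1 hb.2)
      · have hstep := step_append_none Bl hA hb
        cases h : step l r n Bl with
        | none =>
          rw [h] at hstep
          simp only [Option.map_none] at hstep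
          rw [Ex_of_none hstep, Ex_of_none h]
          exact Or.inl rfl
        | some B₂ =>
          rw [h] at hstep
          simp only [Option.map_some] at hstep
          rw [Ex_step hstep, Ex_step h]
          exact ih B₂ h
  have h1 := Ex_append_left (l := l) (r := r) (n := n) Bl A
  rcases key (Ex l r n A) (step_Ex A) Bl with h | h
  · left; rw [h1, h]
  · right
    rw [h1]
    rwa [Ex_decodeSeq B hn] at h

theorem runAll_decodeSeq {ms : List (τ × τ × τ)}
    (hm : ∀ m ∈ ms, B.dec m.2.2 = B.dec m.1 ++ B.dec m.2.1) :
    ∀ T : List τ, B.decodeSeq (runAll ms T) = B.decodeSeq T := by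
  induction ms with
  | nil => intro T; rfl
  | cons m ms ih =>
    intro T
    rw [runAll, ih (fun m h => hm m (List.mem_cons_of_mem _ h)),
      Ex_decodeSeq B (hm m (List.mem_cons_self))]

theorem crosses_runAll {ms : List (τ × τ × τ)}
    (hm : ∀ m ∈ ms, B.dec m.2.2 = B.dec m.1 ++ B.dec m.2.1) {c : ℕ} {T : List τ}
    (hc : Crosses B c T) : Crosses B c (runAll ms T) := by
  induction ms generalizing T with
  | nil => exact hc
  | cons m ms ih =>
    rw [runAll]
    exact ih (fun m h => hm m (List.mem_cons_of_mem _ h))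
      (crosses_Ex B (hm m (List.mem_cons_self)) T hc)

theorem main (hdec : ∀ u : τ, B.dec u ≠ []) (P : List τ) (ti t : τ) :
    ∀ ms : List (τ × τ × τ), (∀ m ∈ ms, B.dec m.2.2 = B.dec m.1 ++ B.dec m.2.1) →
    ∀ X Y Z : List τ,
      runAll ms (X ++ Y) = P ++ [ti] → runAll ms (Y ++ Z) = [ti, t] →
      runAll ms Y = [ti] → runAll ms (X ++ (Y ++ Z)) = P ++ [ti, t] := by
  intro ms
  induction ms with
  | nil =>
    intro _ X Y Z h1 h2 h3
    simp only [runAll] at h1 h2 h3 ⊢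
    subst h3
    have hX : X = P := List.append_cancel_right h1
    have hZ : Z = [t] := by simpa using h2
    subst hX; subst hZ
    simp
  | cons m ms ih =>
    intro hm X Y Z h1 h2 h3
    obtain ⟨l, r, n⟩ := m
    have hn : B.dec n = B.dec l ++ B.dec r := hm _ (List.mem_cons_self)
    have hl := hdec l
    have hr := hdec r
    have hm' : ∀ m ∈ ms, B.dec m.2.2 = B.dec m.1 ++ B.dec m.2.1 :=
      fun m h => hm m (List.mem_cons_of_mem _ h)
    simp only [runAll] at h1 h2 h3 ⊢
    have e3 : B.decodeSeq (runAll ms (Ex l r n Y)) = B.decodeSeq Y := by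
      rw [runAll_decodeSeq B hm', Ex_decodeSeq B hn]
    rw [h3] at e3
    have hdY : B.decodeSeq Y = B.dec ti := by
      rw [← e3, decodeSeq_singleton]
    have e1 : B.decodeSeq (P ++ [ti]) = B.decodeSeq (X ++ Y) := by
      rw [← h1, runAll_decodeSeq B hm', Ex_decodeSeq B hn]
    have hlenX : (B.decodeSeq X).length = (B.decodeSeq P).length := by
      have := congrArg List.length e1
      rw [decodeSeq_append, decodeSeq_append, decodeSeq_singleton, hdY,
        List.length_append, List.length_append] at this
      omega
    have s1 : Ex l r n (X ++ Y) = Ex l r n X ++ Ex l r n Y := by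
      rcases Ex_append_dichotomy B hn hl hr X Y with h | h
      · exact h
      · exfalso
        have hc : Crosses B (B.decodeSeq X).length (P ++ [ti]) := by
          rw [← h1]
          exact crosses_runAll B hm' h
        rw [hlenX] at hc
        exact not_crosses_append B P [ti] hc
    have s2 : Ex l r n (Y ++ Z) = Ex l r n Y ++ Ex l r n Z := by
      rcases Ex_append_dichotomy B hn hl hr Y Z with h | h
      · exact h
      · exfalso
        have hc : Crosses B (B.decodeSeq Y).length [ti, t] := by
          rw [← h2]
          exact crosses_runAll B hm' h
        have heq : (B.decodeSeq Y).length = (B.decodeSeq [ti]).length := by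
          rw [hdY, decodeSeq_singleton]
        rw [heq] at hc
        exact not_crosses_append B [ti] [t] hc
    have hYne : Y ≠ [] := by
      intro h
      rw [h] at hdY
      exact hdec ti (by rw [← hdY]; rfl)
    have Hb : ∀ W, Reach l r n (Y ++ Z) W →
        ¬((Ex l r n X).getLast? = some l ∧ W.head? = some r) := by
      rintro W hre ⟨hgl, hhd⟩
      have hnc : ¬ Crosses B (B.decodeSeq Y).length (Ex l r n (Y ++ Z)) := by
        rw [s2]
        have heq : (B.decodeSeq Y).length = (B.decodeSeq (Ex l r n Y)).length := by
          rw [Ex_decodeSeq B hn]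
        rw [heq]
        exact not_crosses_append B _ _
      obtain ⟨Y', hYr, hY'ne, hW⟩ := reach_head B hn hl hr hre Y Z rfl hYne hnc
      have hY'r : Y'.head? = some r := by rw [← hW]; exact hhd
      have hcr := crosses_of_reach B hn hl hr (step_Ex X) hgl hYr hY'r
      rw [← Ex_append_left Y X, s1] at hcr
      exact not_crosses_append B (Ex l r n X) (Ex l r n Y) hcr
    have s3 : Ex l r n (X ++ (Y ++ Z)) = Ex l r n X ++ (Ex l r n Y ++ Ex l r n Z) := by
      rw [Ex_append_left (Y ++ Z) X, Ex_append_of (step_Ex X) (Y ++ Z) Hb, s2]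
    rw [s3]
    exact ih hm' (Ex l r n X) (Ex l r n Y) (Ex l r n Z) (by rw [← s1]; exact h1)
      (by rw [← s2]; exact h2) h3

theorem rl_map_snd (l r n : τ) : ∀ T : List τ,
    (B.replaceLeftmost l r n T).map Prod.snd = step l r n T
  | [] => rfl
  | [_] => rfl
  | t :: u :: rest => by
    by_cases htu : t = l ∧ u = r
    · simp [BPE.replaceLeftmost, step, htu]
    · simp only [BPE.replaceLeftmost, step, if_neg htu]
      rw [← rl_map_snd l r n (u :: rest)]
      cases h : B.replaceLeftmost l r n (u :: rest) <;> simp [h]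

theorem runMerge_fst (l r n : τ) : ∀ (f : ℕ) (T : List τ),
    (B.runMerge l r n f T).1 = iter l r n f T := by
  intro f
  induction f with
  | zero => intro T; rfl
  | succ f ihf =>
    intro T
    cases h : B.replaceLeftmost l r n T with
    | none =>
      have hs : step l r n T = none := by rw [← rl_map_snd B l r n T, h]; rfl
      simp [BPE.runMerge, iter, h, hs]
    | some q =>
      obtain ⟨p, T'⟩ := q
      have hs : step l r n T = some T' := by rw [← rl_map_snd B l r n T, h]; rfl
      simp [BPE.runMerge, iter, h, hs, ihf]

theorem encodeRunAux_fst : ∀ (L : List (ℕ × τ × τ × τ)) (T : List τ),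
    (B.encodeRunAux L T).1 = runAll (L.map Prod.snd) T := by
  intro L
  induction L with
  | nil => intro T; rfl
  | cons a L ihL =>
    intro T
    obtain ⟨i, l, r, n⟩ := a
    simp only [BPE.encodeRunAux, runAll, List.map_cons]
    rw [ihL, runMerge_fst]
    rfl

theorem encode_eq_runAll (S : List σ) :
    B.encode S = runAll B.merges (S.map B.base) := by
  unfold BPE.encode BPE.encodeRun
  rw [encodeRunAux_fst, List.map_map]
  exact congrArg (runAll · _) (List.zipIdx_map_fst 0 _)

theorem runAll_nil_input : ∀ ms : List (τ × τ × τ), runAll ms ([] : List τ) = [] := by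
  intro ms
  induction ms with
  | nil => rfl
  | cons m ms ih =>
    rw [runAll, show Ex m.1 m.2.1 m.2.2 ([] : List τ) = [] from Ex_of_none rfl]
    exact ih

theorem dec_ne_nil (hNF2 : ∀ u : τ, B.encode (B.dec u) = [u]) (u : τ) :
    B.dec u ≠ [] := by
  intro h
  have h2 := hNF2 u
  rw [h, encode_eq_runAll] at h2
  simp only [List.map_nil] at h2
  rw [runAll_nil_input] at h2
  simp at h2

end WithB

end BPEAux

/-- Let `[t₁, …, tᵢ]` be a valid token sequence with `i ≥ 1` and let
`tᵢ₊₁ ∈ V`. If the pair `[tᵢ, tᵢ₊₁]` is valid, then the sequence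
`[t₁, …, tᵢ, tᵢ₊₁]` is valid. -/
theorem BPE.valid_append_of_valid_pair {σ τ : Type*} [DecidableEq τ]
    (B : BPE σ τ) (hNF : B.NormalForm) (T : List τ) (t : τ) (hT : T ≠ [])
    (hvalid : B.Valid T) (hpair : B.Valid [T.getLast hT, t]) :
    B.Valid (T ++ [t]) := by
  obtain ⟨-, hNF2, -⟩ := hNF
  set ti := T.getLast hT with hti
  have hTsplit : T.dropLast ++ [ti] = T := List.dropLast_append_getLast hT
  set P := T.dropLast with hP
  have hdec : ∀ u : τ, B.dec u ≠ [] := BPEAux.dec_ne_nil B hNF2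
  have hvalid' : B.encode (B.decodeSeq T) = T := hvalid
  have hpair' : B.encode (B.decodeSeq [ti, t]) = [ti, t] := hpair
  have h1 : BPEAux.runAll B.merges
      ((B.decodeSeq P).map B.base ++ (B.dec ti).map B.base) = P ++ [ti] := by
    have hd : B.decodeSeq P ++ B.dec ti = B.decodeSeq T := by
      conv_rhs => rw [← hTsplit]
      rw [BPEAux.decodeSeq_append, BPEAux.decodeSeq_singleton]
    rw [← List.map_append, hd, ← BPEAux.encode_eq_runAll, hvalid', ← hTsplit]
  have h2 : BPEAux.runAll B.merges
      ((B.dec ti).map B.base ++ (B.dec t).map B.base) = [ti, t] := by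
    have hd : B.dec ti ++ B.dec t = B.decodeSeq [ti, t] := by
      rw [BPEAux.decodeSeq_cons, BPEAux.decodeSeq_singleton]
    rw [← List.map_append, hd, ← BPEAux.encode_eq_runAll, hpair']
  have h3 : BPEAux.runAll B.merges ((B.dec ti).map B.base) = [ti] := by
    rw [← BPEAux.encode_eq_runAll]
    exact hNF2 ti
  have hmain := BPEAux.main B hdec P ti t B.merges B.dec_merge
    ((B.decodeSeq P).map B.base) ((B.dec ti).map B.base) ((B.dec t).map B.base)
    h1 h2 h3
  show B.encode (B.decodeSeq (T ++ [t])) = T ++ [t]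
  have hd : B.decodeSeq (T ++ [t]) = B.decodeSeq P ++ (B.dec ti ++ B.dec t) := by
    conv_lhs => rw [← hTsplit]
    rw [BPEAux.decodeSeq_append, BPEAux.decodeSeq_append, BPEAux.decodeSeq_singleton,
      BPEAux.decodeSeq_singleton, List.append_assoc]
  rw [hd, BPEAux.encode_eq_runAll, List.map_append, List.map_append, hmain, ← hTsplit]
  simp
end
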